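/- arXiv:math/0703812 — 3 statements merged into one kernel-verified Lean document; each statement's English description precedes it below -/
import Mathlib

section
/- For every continuous function φ : S² → ℝ and every v ∈ S², one has (1/π) ∫_{{ω ∈ S² : v·ω > 0}} (φ(v − 2(v·ω)ω) − φ(v)) (v·ω) dω = (1/(4π)) ∫_{S²} (φ(w) − φ(v)) dw, where both integrals are taken with respect to the (unnormalized) surface measure on S² (of total mass 4π). In particular the Lorentz collision integral coincides with a linear Boltzmann collision integral with constant kernel k(v,w) ≡ 1/(4π). -/
open MeasureTheory Metric Set Filter Topology
open scoped ENNReal RealInnerProductSpace Real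

noncomputable section

abbrev EucSp (D : ℕ) := EuclideanSpace ℝ (Fin D)
abbrev Sph (D : ℕ) := Metric.sphere (0 : EucSp D) 1
def sphArea (D : ℕ) : Measure (Sph D) := (volume : Measure (EucSp D)).toSphere

/-- The specular reflection `v - 2 (v·ω) ω` of a unit vector `v` with respect to the
hyperplane orthogonal to the unit vector `ω`; it is again a unit vector. -/
def specReflect (v ω : Sph 3) : Sph 3 :=
  ⟨(v : EucSp 3) - (2 * ⟪(v : EucSp 3), (ω : EucSp 3)⟫) • (ω : EucSp 3), by
    have hv : ‖(v : EucSp 3)‖ = 1 := by simpa using v.2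
    have hω : ‖(ω : EucSp 3)‖ = 1 := by simpa using ω.2
    rw [mem_sphere_zero_iff_norm]
    have h2 : ‖(v : EucSp 3) - (2 * ⟪(v : EucSp 3), (ω : EucSp 3)⟫) • (ω : EucSp 3)‖ ^ 2 = 1 := by
      rw [norm_sub_sq_real, real_inner_smul_right, norm_smul, hv, hω]
      simp [mul_pow, sq_abs]
      ring
    nlinarith [norm_nonneg ((v : EucSp 3) - (2 * ⟪(v : EucSp 3), (ω : EucSp 3)⟫) • (ω : EucSp 3))]⟩

/-! ### Auxiliary: polar-coordinates pullback of sphere integrals -/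

open scoped Classical in
/-- normalization map, junk value at 0 -/
def np (x : EucSp 3) : Sph 3 :=
  if hx : x = 0 then ⟨EuclideanSpace.single 0 1, by simp⟩
  else ⟨‖x‖⁻¹ • x, by
    rw [mem_sphere_zero_iff_norm, norm_smul, norm_inv, norm_norm,
      inv_mul_cancel₀ (norm_ne_zero_iff.2 hx)]⟩

lemma np_coe {x : EucSp 3} (hx : x ≠ 0) : (np x : EucSp 3) = ‖x‖⁻¹ • x := by
  rw [np, dif_neg hx]

lemma radial_int (h : ℝ → ℝ) :
    ∫ y : Set.Ioi (0:ℝ), h y.1 ∂(Measure.volumeIoiPow 2)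
      = ∫ r in Set.Ioi (0:ℝ), r ^ 2 * h r := by
  simp only [Measure.volumeIoiPow, ENNReal.ofReal]
  rw [integral_withDensity_eq_integral_smul
      (by exact (measurable_subtype_coe.pow_const _).real_toNNReal),
    integral_subtype_comap measurableSet_Ioi fun a ↦ Real.toNNReal (a ^ 2) • h a,
    setIntegral_congr_fun measurableSet_Ioi fun x hx ↦ ?_]
  rw [NNReal.smul_def, Real.coe_toNNReal _ (pow_nonneg hx.out.le _), smul_eq_mul]

lemma sph_pullback (f : Sph 3 → ℝ) (h : ℝ → ℝ) :
    (∫ ω, f ω ∂(sphArea 3)) * (∫ r in Set.Ioi (0:ℝ), r ^ 2 * h r)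
      = ∫ x : EucSp 3, f (np x) * h ‖x‖ := by
  have key := (volume : Measure (EucSp 3)).measurePreserving_homeomorphUnitSphereProd
  have h1 := key.integral_comp (Homeomorph.measurableEmbedding _)
      (fun p : Sph 3 × Set.Ioi (0:ℝ) => f p.1 * h p.2.1)
  have hdim : Module.finrank ℝ (EucSp 3) - 1 = 2 := by
    rw [finrank_euclideanSpace_fin]
  rw [hdim] at h1
  rw [show (sphArea 3) = (volume : Measure (EucSp 3)).toSphere from rfl]
  rw [integral_prod_mul f (fun r : Set.Ioi (0:ℝ) => h r.1), radial_int] at h1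
  have h2 : ∫ x : EucSp 3, f (np x) * h ‖x‖
      = ∫ z : ({(0 : EucSp 3)}ᶜ : Set (EucSp 3)), f (np z.1) * h ‖z.1‖
          ∂((volume : Measure (EucSp 3)).comap (↑)) := by
    rw [integral_subtype_comap (measurableSet_singleton (0 : EucSp 3)).compl
      (fun x => f (np x) * h ‖x‖), MeasureTheory.restrict_compl_singleton]
  rw [h2, ← h1]
  refine integral_congr_ae (Filter.Eventually.of_forall fun z => ?_)
  have hz : (z : EucSp 3) ≠ 0 := z.2
  simp only [homeomorphUnitSphereProd_apply_fst_coe]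
  congr 1
  congr 1
  exact Subtype.ext (by rw [np_coe hz]; simp [homeomorphUnitSphereProd])
  simp [homeomorphUnitSphereProd]

lemma radial_indicator (u : ℝ → ℝ) :
    ∫ r in Set.Ioi (0:ℝ), r ^ 2 * (Set.Ioo (0:ℝ) 1).indicator u r
      = ∫ r in Set.Ioo (0:ℝ) 1, r ^ 2 * u r := by
  have : ∀ r : ℝ, r ^ 2 * (Set.Ioo (0:ℝ) 1).indicator u r
      = (Set.Ioo (0:ℝ) 1).indicator (fun r => r ^ 2 * u r) r := by
    intro r
    by_cases hr : r ∈ Set.Ioo (0:ℝ) 1 <;> simp [hr]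
  simp_rw [this]
  rw [integral_indicator measurableSet_Ioo, Measure.restrict_restrict measurableSet_Ioo,
    Set.inter_eq_self_of_subset_left Set.Ioo_subset_Ioi_self]

lemma pow_Ioo_int (n : ℕ) : ∫ r in Set.Ioo (0:ℝ) 1, r ^ n = 1 / (n + 1) := by
  rw [setIntegral_congr_set Ioo_ae_eq_Ioc, ← intervalIntegral.integral_of_le zero_le_one,
    integral_pow]
  simp

lemma ball_mem_iff (x : EucSp 3) : x ∈ ball (0 : EucSp 3) 1 \ {0} ↔ ‖x‖ ∈ Set.Ioo (0:ℝ) 1 := by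
  simp [mem_ball_zero_iff, norm_pos_iff, and_comm]

lemma ball_form (g : EucSp 3 → ℝ) (u : ℝ → ℝ) :
    ∫ x : EucSp 3, g x * (Set.Ioo (0:ℝ) 1).indicator u ‖x‖
      = ∫ x in ball (0 : EucSp 3) 1 \ {0}, g x * u ‖x‖ := by
  have hms : MeasurableSet (ball (0 : EucSp 3) 1 \ {0}) :=
    measurableSet_ball.diff (measurableSet_singleton _)
  rw [← integral_indicator hms]
  congr 1 with x
  by_cases hx : ‖x‖ ∈ Set.Ioo (0:ℝ) 1
  · rw [Set.indicator_of_mem ((ball_mem_iff x).2 hx), Set.indicator_of_mem hx]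
  · rw [Set.indicator_of_notMem (fun h => hx ((ball_mem_iff x).1 h)),
      Set.indicator_of_notMem hx, mul_zero]

/-! ### Auxiliary: the quadratic reflection map and its Jacobian -/

def Fmap (v x : EucSp 3) : EucSp 3 := ⟪x, x⟫ • v - (2 * ⟪v, x⟫) • x

def Fder (v x : EucSp 3) : EucSp 3 →L[ℝ] EucSp 3 :=
  (2:ℝ) • ((innerSL ℝ x).smulRight v) - (2:ℝ) • ((innerSL ℝ v).smulRight x)
    - (2 * ⟪v, x⟫) • ContinuousLinearMap.id ℝ (EucSp 3)

lemma Fder_apply (v x u : EucSp 3) :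
    Fder v x u = (2 * ⟪x, u⟫) • v - (2 * ⟪v, u⟫) • x - (2 * ⟪v, x⟫) • u := by
  simp [Fder, mul_smul]

lemma hasFDerivAt_Fmap (v x : EucSp 3) : HasFDerivAt (Fmap v) (Fder v x) x := by
  have h1 : HasFDerivAt (fun y : EucSp 3 => (⟪y, y⟫ : ℝ)) _ x :=
    (hasFDerivAt_id x).inner ℝ (hasFDerivAt_id x)
  have h2 := h1.smul (hasFDerivAt_const v x)
  have h3 : HasFDerivAt (fun y : EucSp 3 => (2 * ⟪v, y⟫ : ℝ)) _ x :=
    ((hasFDerivAt_const v x).inner ℝ (hasFDerivAt_id x)).const_mul 2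
  have h4 := h3.smul (hasFDerivAt_id x)
  have h := h2.sub h4
  refine h.congr_fderiv (ContinuousLinearMap.ext fun u => ?_)
  simp only [ContinuousLinearMap.add_apply, ContinuousLinearMap.sub_apply,
    ContinuousLinearMap.smul_apply, ContinuousLinearMap.smulRight_apply,
    ContinuousLinearMap.comp_apply, ContinuousLinearMap.prod_apply,
    ContinuousLinearMap.coe_id', ContinuousLinearMap.zero_apply, id_eq,
    fderivInnerCLM_apply, Fder_apply, smul_eq_mul, ← Nat.cast_smul_eq_nsmul ℝ]
  rw [real_inner_comm u x]
  simp only [inner_zero_left]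
  module

lemma det_Fder (v x : EucSp 3) :
    (Fder v x).det = -(8 * ⟪v, v⟫ * ⟪x, x⟫ * ⟪v, x⟫) := by
  have hdet : (Fder v x).det
      = LinearMap.det ((Fder v x) : EucSp 3 →ₗ[ℝ] EucSp 3) := rfl
  rw [hdet, ← LinearMap.det_toMatrix ((EuclideanSpace.basisFun (Fin 3) ℝ).toBasis),
    Matrix.det_fin_three]
  simp only [LinearMap.toMatrix_apply, OrthonormalBasis.coe_toBasis,
    OrthonormalBasis.coe_toBasis_repr_apply, EuclideanSpace.basisFun_repr,
    EuclideanSpace.basisFun_apply, ContinuousLinearMap.coe_coe, Fder_apply,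
    EuclideanSpace.inner_single_right, RCLike.inner_apply, starRingEnd_apply, star_trivial,
    PiLp.sub_apply, PiLp.smul_apply, EuclideanSpace.single_apply, smul_eq_mul, mul_one]
  simp only [PiLp.inner_apply, RCLike.inner_apply, starRingEnd_apply, star_trivial,
    Fin.sum_univ_three]
  simp only [Fin.reduceEq, if_false, if_true, reduceIte]
  ring

/-! ### Geometric properties of `Fmap` -/

lemma inner_Fmap_self (v x : EucSp 3) (hv : ⟪v, v⟫ = 1) :
    ⟪Fmap v x, Fmap v x⟫ = ⟪x, x⟫ ^ 2 := by
  simp only [Fmap, inner_sub_left, inner_sub_right, real_inner_smul_left, real_inner_smul_right]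
  rw [real_inner_comm x v, hv]
  ring

lemma inner_v_Fmap (v x : EucSp 3) (hv : ⟪v, v⟫ = 1) :
    ⟪v, Fmap v x⟫ = ⟪x, x⟫ - 2 * ⟪v, x⟫ ^ 2 := by
  simp only [Fmap, inner_sub_right, real_inner_smul_right, hv]
  ring

lemma key_lin (v x : EucSp 3) : ⟪x, x⟫ • v - Fmap v x = (2 * ⟪v, x⟫) • x := by
  simp [Fmap]

lemma norm_Fmap (v x : EucSp 3) (hv : ⟪v, v⟫ = 1) : ‖Fmap v x‖ = ‖x‖ ^ 2 := by
  have h := inner_Fmap_self v x hv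
  rw [real_inner_self_eq_norm_sq, real_inner_self_eq_norm_sq] at h
  nlinarith [norm_nonneg (Fmap v x), norm_nonneg x, sq_nonneg (‖Fmap v x‖ - ‖x‖ ^ 2),
    sq_nonneg (‖Fmap v x‖ + ‖x‖ ^ 2)]

lemma Fmap_injOn (v : EucSp 3) (hv : ⟪v, v⟫ = 1) :
    Set.InjOn (Fmap v) {x : EucSp 3 | 0 < ⟪v, x⟫} := by
  intro x hx y hy hF
  have hx' : (0:ℝ) < ⟪v, x⟫ := hx
  have hy' : (0:ℝ) < ⟪v, y⟫ := hy
  have hqx : (0:ℝ) ≤ ⟪x, x⟫ := real_inner_self_nonneg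
  have hqy : (0:ℝ) ≤ ⟪y, y⟫ := real_inner_self_nonneg
  have h1 : ⟪x, x⟫ ^ 2 = ⟪y, y⟫ ^ 2 := by
    rw [← inner_Fmap_self v x hv, ← inner_Fmap_self v y hv, hF]
  have hq : ⟪x, x⟫ = ⟪y, y⟫ := by
    have h0 : (⟪x, x⟫ - ⟪y, y⟫) * (⟪x, x⟫ + ⟪y, y⟫) = 0 := by linear_combination h1
    rcases mul_eq_zero.1 h0 with h | h
    · linarith
    · linarith
  have h2 : ⟪x, x⟫ - 2 * ⟪v, x⟫ ^ 2 = ⟪y, y⟫ - 2 * ⟪v, y⟫ ^ 2 := by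
    rw [← inner_v_Fmap v x hv, ← inner_v_Fmap v y hv, hF]
  have hp : ⟪v, x⟫ = ⟪v, y⟫ := by
    have h0 : (⟪v, x⟫ - ⟪v, y⟫) * (⟪v, x⟫ + ⟪v, y⟫) = 0 := by linear_combination (h2 - hq) / (-2)
    rcases mul_eq_zero.1 h0 with h | h
    · linarith
    · linarith
  have h3 : (2 * ⟪v, x⟫) • x = (2 * ⟪v, y⟫) • y := by
    rw [← key_lin v x, ← key_lin v y, hq, hF]
  rw [hp] at h3
  exact smul_right_injective (EucSp 3) (by positivity) h3

def ray (v : EucSp 3) : Set (EucSp 3) := {y | ∃ t : ℝ, 0 ≤ t ∧ y = t • v}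

lemma Fmap_image (v : EucSp 3) (hv : ⟪v, v⟫ = 1) :
    Fmap v '' (ball (0 : EucSp 3) 1 ∩ {x : EucSp 3 | 0 < ⟪v, x⟫})
      = ball (0 : EucSp 3) 1 \ ray v := by
  have hv0 : v ≠ 0 := by
    intro h; rw [h, inner_zero_left] at hv; norm_num at hv
  ext y
  constructor
  · rintro ⟨x, ⟨hxb, hxp⟩, rfl⟩
    have hxp' : (0:ℝ) < ⟪v, x⟫ := hxp
    have hxn : ‖x‖ < 1 := mem_ball_zero_iff.1 hxb
    constructor
    · rw [mem_ball_zero_iff, norm_Fmap v x hv]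
      nlinarith [norm_nonneg x]
    · rintro ⟨t, ht, hty⟩
      have hkey : (⟪x, x⟫ - t) • v = (2 * ⟪v, x⟫) • x := by
        rw [← key_lin v x, hty, sub_smul]
      have h2p : (2 * ⟪v, x⟫) ≠ 0 := by positivity
      have hxc : x = ((⟪x, x⟫ - t) / (2 * ⟪v, x⟫)) • v := by
        rw [div_eq_inv_mul, mul_smul, hkey, inv_smul_smul₀ h2p]
      set c := (⟪x, x⟫ - t) / (2 * ⟪v, x⟫) with hc
      have hpc : ⟪v, x⟫ = c := by rw [hxc, real_inner_smul_right, hv, mul_one]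
      have hqc : ⟪x, x⟫ = c ^ 2 := by
        rw [hxc, real_inner_smul_right, real_inner_smul_left, hv]; ring
      have hFc : Fmap v x = (-(c ^ 2)) • v := by
        have hstep : Fmap v x = (c ^ 2) • v - (2 * c) • (c • v) := by
          rw [Fmap, hqc, hpc]
          conv_lhs => rw [hxc]
        rw [hstep, smul_smul, ← sub_smul]
        congr 1
        ring
      have htc : t = -(c ^ 2) := by
        have := hty.symm.trans hFc
        exact smul_left_injective ℝ hv0 this
      nlinarith [hpc ▸ hxp']
  · rintro ⟨hyb, hyr⟩
    have hy0 : y ≠ 0 := by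
      rintro rfl; exact hyr ⟨0, le_refl _, by simp⟩
    set r := ‖y‖ with hr
    have hr0 : 0 < r := norm_pos_iff.2 hy0
    have hr1 : r < 1 := mem_ball_zero_iff.1 hyb
    set w : EucSp 3 := r⁻¹ • y with hw
    have hww : ⟪w, w⟫ = 1 := by
      rw [real_inner_self_eq_norm_sq, hw, norm_smul, norm_inv, norm_norm, ← hr,
        inv_mul_cancel₀ hr0.ne']
      norm_num
    set u : EucSp 3 := v - w with hu
    have hu0 : u ≠ 0 := by
      intro h
      have hvw : v = w := by rwa [hu, sub_eq_zero] at h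
      exact hyr ⟨r, hr0.le, by rw [hvw, hw, smul_smul, mul_inv_cancel₀ hr0.ne', one_smul]⟩
    set c := ‖u‖ with hc
    have hc0 : 0 < c := norm_pos_iff.2 hu0
    have hcu : ⟪u, u⟫ = c ^ 2 := by rw [real_inner_self_eq_norm_sq]
    have hvu : ⟪v, u⟫ = c ^ 2 / 2 := by
      have : ⟪u, u⟫ = 2 - 2 * ⟪v, w⟫ := by
        simp only [hu, inner_sub_left, inner_sub_right, hv, hww]
        rw [real_inner_comm w v]; ring
      have h2 : ⟪v, u⟫ = 1 - ⟪v, w⟫ := by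
        simp only [hu, inner_sub_right, hv]
      rw [h2]; rw [this] at hcu; linarith
    have hsq : Real.sqrt r * Real.sqrt r = r := Real.mul_self_sqrt hr0.le
    refine ⟨(Real.sqrt r * c⁻¹) • u, ⟨?_, ?_⟩, ?_⟩
    · have h1 : ‖(Real.sqrt r * c⁻¹) • u‖ = Real.sqrt r := by
        rw [norm_smul, ← hc, Real.norm_eq_abs, abs_of_nonneg (by positivity), mul_assoc,
          inv_mul_cancel₀ hc0.ne', mul_one]
      rw [mem_ball_zero_iff, h1]
      have : Real.sqrt r < Real.sqrt 1 := Real.sqrt_lt_sqrt hr0.le hr1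
      simpa using this
    · show 0 < ⟪v, (Real.sqrt r * c⁻¹) • u⟫
      rw [real_inner_smul_right, hvu]
      have hsr : 0 < Real.sqrt r := Real.sqrt_pos.2 hr0
      positivity
    · have hq2 : ⟪(Real.sqrt r * c⁻¹) • u, (Real.sqrt r * c⁻¹) • u⟫ = r := by
        rw [real_inner_smul_left, real_inner_smul_right, hcu]
        field_simp
        linear_combination hsq
      have hp2 : ⟪v, (Real.sqrt r * c⁻¹) • u⟫ = Real.sqrt r * c / 2 := by
        rw [real_inner_smul_right, hvu]
        field_simp
      rw [Fmap, hq2, hp2, smul_smul]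
      have hco : 2 * (Real.sqrt r * c / 2) * (Real.sqrt r * c⁻¹) = r := by
        field_simp
        linear_combination hsq
      rw [hco, hu, smul_sub]
      have : r • w = y := by
        rw [hw, smul_smul, mul_inv_cancel₀ hr0.ne', one_smul]
      rw [sub_sub_cancel, this]

lemma Fmap_ne_zero {v x : EucSp 3} (hv : ⟪v, v⟫ = 1) (hx : x ≠ 0) : Fmap v x ≠ 0 := by
  intro h
  have h1 := norm_Fmap v x hv
  rw [h, norm_zero] at h1
  exact hx (norm_eq_zero.1 (by nlinarith [norm_nonneg x]))

lemma np_Fmap (v : Sph 3) {x : EucSp 3} (hx : x ≠ 0) :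
    specReflect v (np x) = np (Fmap (v : EucSp 3) x) := by
  have hv1 : ‖(v : EucSp 3)‖ = 1 := by simpa using v.2
  have hv : ⟪(v : EucSp 3), (v : EucSp 3)⟫ = 1 := by
    rw [real_inner_self_eq_norm_sq, hv1]; norm_num
  have hxn : ‖x‖ ≠ 0 := norm_ne_zero_iff.2 hx
  apply Subtype.ext
  rw [show (specReflect v (np x) : EucSp 3)
      = (v : EucSp 3) - (2 * ⟪(v : EucSp 3), (np x : EucSp 3)⟫) • (np x : EucSp 3) from rfl,
    np_coe hx, np_coe (Fmap_ne_zero hv hx), norm_Fmap _ x hv, Fmap,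
    real_inner_smul_right, real_inner_self_eq_norm_sq, smul_smul, smul_sub, smul_smul, smul_smul]
  match_scalars
  · field_simp
  · field_simp

lemma np_inner (v : Sph 3) {x : EucSp 3} (hx : x ≠ 0) :
    ⟪(v : EucSp 3), (np x : EucSp 3)⟫ = ‖x‖⁻¹ * ⟪(v : EucSp 3), x⟫ := by
  rw [np_coe hx, real_inner_smul_right]

lemma ray_null (v : EucSp 3) (hv : ⟪v, v⟫ = 1) : (volume : Measure (EucSp 3)) (ray v) = 0 := by
  have hv0 : v ≠ 0 := by
    intro h; rw [h, inner_zero_left] at hv; norm_num at hv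
  have hsub : ray v ⊆ (Submodule.span ℝ {v} : Submodule ℝ (EucSp 3)) := by
    rintro y ⟨t, _, rfl⟩
    exact Submodule.smul_mem _ t (Submodule.mem_span_singleton_self v)
  refine measure_mono_null hsub (Measure.addHaar_submodule (volume : Measure (EucSp 3)) (Submodule.span ℝ {v}) ?_)
  intro h
  have h1 := finrank_span_singleton (K := ℝ) hv0
  rw [h, finrank_top, finrank_euclideanSpace_fin] at h1
  norm_num at h1

/-- The Lorentz collision integral on `S²` coincides with a linear Boltzmann collision
integral with constant kernel `k(v,w) ≡ 1/(4π)`: for every continuous `φ : S² → ℝ` and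
every `v ∈ S²`,
`(1/π) ∫_{v·ω > 0} (φ(v - 2(v·ω)ω) - φ(v)) (v·ω) dω = (1/(4π)) ∫_{S²} (φ(w) - φ(v)) dw`,
both integrals being with respect to the surface measure on `S²` (of total mass `4π`). -/
theorem lorentz_collision_eq_boltzmann (φ : Sph 3 → ℝ) (hφ : Continuous φ) (v : Sph 3) :
    (1 / π) * ∫ ω in {ω : Sph 3 | 0 < ⟪(v : EucSp 3), (ω : EucSp 3)⟫},
        (φ (specReflect v ω) - φ v) * ⟪(v : EucSp 3), (ω : EucSp 3)⟫ ∂(sphArea 3)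
      = (1 / (4 * π)) * ∫ w, (φ w - φ v) ∂(sphArea 3) := by
  have hv1 : ‖(v : EucSp 3)‖ = 1 := by simpa using v.2
  have hv : ⟪(v : EucSp 3), (v : EucSp 3)⟫ = 1 := by
    rw [real_inner_self_eq_norm_sq, hv1]; norm_num
  set f : Sph 3 → ℝ := fun w => φ w - φ v with hf
  set g : Sph 3 → ℝ := fun ω =>
    ({ω : Sph 3 | 0 < ⟪(v : EucSp 3), (ω : EucSp 3)⟫}).indicator
      (fun ω => (φ (specReflect v ω) - φ v) * ⟪(v : EucSp 3), (ω : EucSp 3)⟫) ω with hg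
  have hSphSet : MeasurableSet {ω : Sph 3 | 0 < ⟪(v : EucSp 3), (ω : EucSp 3)⟫} :=
    (isOpen_lt continuous_const (continuous_const.inner continuous_subtype_val)).measurableSet
  have step0 : (∫ ω in {ω : Sph 3 | 0 < ⟪(v : EucSp 3), (ω : EucSp 3)⟫},
      (φ (specReflect v ω) - φ v) * ⟪(v : EucSp 3), (ω : EucSp 3)⟫ ∂(sphArea 3))
      = ∫ ω, g ω ∂(sphArea 3) :=
    (integral_indicator hSphSet).symm
  have stepR : ∫ x in ball (0:EucSp 3) 1 \ {0}, f (np x)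
      = (∫ w, f w ∂(sphArea 3)) * (1/3) := by
    have h := sph_pullback f ((Set.Ioo (0:ℝ) 1).indicator (fun _ => (1:ℝ)))
    rw [radial_indicator, ball_form (fun x => f (np x)) (fun _ => (1:ℝ))] at h
    simp only [mul_one] at h
    rw [pow_Ioo_int 2] at h
    rw [← h]
    norm_num
  have stepL : (∫ ω, g ω ∂(sphArea 3)) * (1/6)
      = ∫ x in ball (0:EucSp 3) 1 \ {0}, g (np x) * ‖x‖ ^ 3 := by
    have h := sph_pullback g ((Set.Ioo (0:ℝ) 1).indicator (fun r => r ^ 3))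
    rw [radial_indicator, ball_form (fun x => g (np x)) (fun r => r ^ 3)] at h
    have h5 : ∫ r in Set.Ioo (0:ℝ) 1, r ^ 2 * r ^ 3 = ∫ r in Set.Ioo (0:ℝ) 1, r ^ 5 :=
      setIntegral_congr_fun measurableSet_Ioo fun r _ => by ring
    rw [h5, pow_Ioo_int 5] at h
    rw [← h]
    norm_num
  have hConeMeas : MeasurableSet {x : EucSp 3 | 0 < ⟪(v : EucSp 3), x⟫} :=
    (isOpen_lt continuous_const (continuous_const.inner
      (continuous_id : Continuous fun x : EucSp 3 => x))).measurableSet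
  have hSmeas : MeasurableSet (ball (0:EucSp 3) 1 ∩ {x : EucSp 3 | 0 < ⟪(v : EucSp 3), x⟫}) :=
    measurableSet_ball.inter hConeMeas
  have hballMeas : MeasurableSet (ball (0:EucSp 3) 1 \ {0}) :=
    measurableSet_ball.diff (measurableSet_singleton _)
  have step3 : ∫ x in ball (0:EucSp 3) 1 \ {0}, g (np x) * ‖x‖ ^ 3
      = ∫ x in ball (0:EucSp 3) 1 \ {0},
          ({x : EucSp 3 | 0 < ⟪(v : EucSp 3), x⟫}).indicator
            (fun x => (φ (np (Fmap (v : EucSp 3) x)) - φ v) * (⟪(v : EucSp 3), x⟫ * ‖x‖ ^ 2)) x := by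
    refine setIntegral_congr_fun hballMeas fun x hx => ?_
    have hx0 : x ≠ 0 := hx.2
    have hxn : ‖x‖ ≠ 0 := norm_ne_zero_iff.2 hx0
    by_cases hpx : x ∈ {x : EucSp 3 | 0 < ⟪(v : EucSp 3), x⟫}
    · have hnpx : np x ∈ {ω : Sph 3 | 0 < ⟪(v : EucSp 3), (ω : EucSp 3)⟫} := by
        show 0 < ⟪(v : EucSp 3), (np x : EucSp 3)⟫
        rw [np_inner v hx0]
        have hpx' : 0 < ⟪(v : EucSp 3), x⟫ := hpx
        have hinv : 0 < ‖x‖⁻¹ := by positivity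
        positivity
      simp only [hg]
      rw [Set.indicator_of_mem hnpx, Set.indicator_of_mem hpx,
        np_Fmap v hx0, np_inner v hx0]
      field_simp
    · have hnpx : np x ∉ {ω : Sph 3 | 0 < ⟪(v : EucSp 3), (ω : EucSp 3)⟫} := by
        intro hmem
        apply hpx
        have h2 : 0 < ‖x‖⁻¹ * ⟪(v : EucSp 3), x⟫ := by
          have := hmem.out
          rwa [np_inner v hx0] at this
        have h3 := mul_pos (norm_pos_iff.2 hx0) h2
        rwa [← mul_assoc, mul_inv_cancel₀ hxn, one_mul] at h3
      simp only [hg]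
      rw [Set.indicator_of_notMem hnpx, Set.indicator_of_notMem hpx, zero_mul]
  have step4 : ∫ x in ball (0:EucSp 3) 1 \ {0},
          ({x : EucSp 3 | 0 < ⟪(v : EucSp 3), x⟫}).indicator
            (fun x => (φ (np (Fmap (v : EucSp 3) x)) - φ v) * (⟪(v : EucSp 3), x⟫ * ‖x‖ ^ 2)) x
      = ∫ x in ball (0:EucSp 3) 1 ∩ {x : EucSp 3 | 0 < ⟪(v : EucSp 3), x⟫},
          (φ (np (Fmap (v : EucSp 3) x)) - φ v) * (⟪(v : EucSp 3), x⟫ * ‖x‖ ^ 2) := by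
    have hsets : (ball (0:EucSp 3) 1 \ {0}) ∩ {x : EucSp 3 | 0 < ⟪(v : EucSp 3), x⟫}
        = ball (0:EucSp 3) 1 ∩ {x : EucSp 3 | 0 < ⟪(v : EucSp 3), x⟫} := by
      ext z
      simp only [Set.mem_inter_iff, Set.mem_diff, Set.mem_singleton_iff, Set.mem_setOf_eq]
      constructor
      · rintro ⟨⟨hb, _⟩, hp⟩; exact ⟨hb, hp⟩
      · rintro ⟨hb, hp⟩
        refine ⟨⟨hb, ?_⟩, hp⟩
        rintro rfl
        rw [inner_zero_right] at hp
        exact lt_irrefl 0 hp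
    rw [setIntegral_indicator hConeMeas, hsets]
  have step5 : ∫ x in ball (0:EucSp 3) 1 ∩ {x : EucSp 3 | 0 < ⟪(v : EucSp 3), x⟫},
          (φ (np (Fmap (v : EucSp 3) x)) - φ v) * (⟪(v : EucSp 3), x⟫ * ‖x‖ ^ 2)
      = (1/8) * ∫ x in ball (0:EucSp 3) 1 ∩ {x : EucSp 3 | 0 < ⟪(v : EucSp 3), x⟫},
          |(Fder (v : EucSp 3) x).det| • (φ (np (Fmap (v : EucSp 3) x)) - φ v) := by
    have hB : ∫ x in ball (0:EucSp 3) 1 ∩ {x : EucSp 3 | 0 < ⟪(v : EucSp 3), x⟫},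
          |(Fder (v : EucSp 3) x).det| • (φ (np (Fmap (v : EucSp 3) x)) - φ v)
        = ∫ x in ball (0:EucSp 3) 1 ∩ {x : EucSp 3 | 0 < ⟪(v : EucSp 3), x⟫},
            8 * ((φ (np (Fmap (v : EucSp 3) x)) - φ v) * (⟪(v : EucSp 3), x⟫ * ‖x‖ ^ 2)) := by
      refine setIntegral_congr_fun hSmeas fun x hx => ?_
      have hp : 0 < ⟪(v : EucSp 3), x⟫ := hx.2
      have hq : (0:ℝ) ≤ ⟪x, x⟫ := real_inner_self_nonneg
      rw [det_Fder, hv, smul_eq_mul, abs_of_nonpos (by nlinarith),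
        real_inner_self_eq_norm_sq]
      ring
    rw [hB, integral_const_mul]
    ring
  have step6 : ∫ x in ball (0:EucSp 3) 1 ∩ {x : EucSp 3 | 0 < ⟪(v : EucSp 3), x⟫},
          |(Fder (v : EucSp 3) x).det| • (φ (np (Fmap (v : EucSp 3) x)) - φ v)
      = ∫ y in Fmap (v : EucSp 3) '' (ball (0:EucSp 3) 1 ∩ {x : EucSp 3 | 0 < ⟪(v : EucSp 3), x⟫}),
          (φ (np y) - φ v) :=
    (integral_image_eq_integral_abs_det_fderiv_smul volume hSmeas
      (fun x _ => (hasFDerivAt_Fmap (v : EucSp 3) x).hasFDerivWithinAt)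
      ((Fmap_injOn (v : EucSp 3) hv).mono Set.inter_subset_right)
      (fun y => φ (np y) - φ v)).symm
  have step7 : ∫ y in Fmap (v : EucSp 3) '' (ball (0:EucSp 3) 1 ∩ {x : EucSp 3 | 0 < ⟪(v : EucSp 3), x⟫}),
          (φ (np y) - φ v)
      = ∫ y in ball (0:EucSp 3) 1 \ {0}, (φ (np y) - φ v) := by
    rw [Fmap_image (v : EucSp 3) hv]
    refine setIntegral_congr_set ?_
    rw [MeasureTheory.ae_eq_set]
    constructor
    · refine measure_mono_null (fun x hx => ?_) (measure_singleton (0 : EucSp 3))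
      rcases hx with ⟨⟨hb, hr⟩, hnot⟩
      simp only [Set.mem_diff, Set.mem_singleton_iff, not_and, not_not] at hnot
      exact hnot hb
    · refine measure_mono_null (fun x hx => ?_) (ray_null (v : EucSp 3) hv)
      rcases hx with ⟨⟨hb, _⟩, hnot⟩
      simp only [Set.mem_diff, not_and, not_not] at hnot
      exact hnot hb
  have keyg : (∫ ω, g ω ∂(sphArea 3)) = (1/4) * ∫ w, f w ∂(sphArea 3) := by
    have e1 := stepL.trans (step3.trans (step4.trans (step5.trans (by rw [step6, step7]))))
    have e2 : ∫ y in ball (0:EucSp 3) 1 \ {0}, (φ (np y) - φ v)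
        = ∫ x in ball (0:EucSp 3) 1 \ {0}, f (np x) := rfl
    rw [e2, stepR] at e1
    linarith
  rw [step0, keyg]
  have hπ : (π:ℝ) ≠ 0 := Real.pi_ne_zero
  rw [hf]
  ring
end
end

section
/- Let D ≥ 2 and r ∈ (0,1/2). If v ∈ S^{D-1} satisfies k·v ≠ 0 for every k ∈ ℤ^D \ {0}, then τ_r(x,v) < +∞ for every x ∈ Z_r. -/
open MeasureTheory Metric Set Filter Topology
open scoped ENNReal RealInnerProductSpace

noncomputable section

/-- The integer lattice `ℤ^D ⊆ ℝ^D`. -/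
def intLattice (D : ℕ) : Set (EucSp D) := {x | ∀ i, ∃ m : ℤ, x i = (m : ℝ)}

/-- The free path length (forward exit time) `τ_r(x,v)` of the periodic Lorentz gas:
the infimum of times `t > 0` such that `x + t v` is within distance `r` of the lattice,
`+∞` if there is no such time, and `0` if `x` itself is within distance `r` of the lattice. -/
def freePath (D : ℕ) (r : ℝ) (x v : EucSp D) : ℝ≥0∞ :=
  if Metric.infDist x (intLattice D) ≤ r then 0
  else sInf (ENNReal.ofReal '' {t : ℝ | 0 < t ∧ Metric.infDist (x + t • v) (intLattice D) ≤ r})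

/-- The rotationally invariant probability measure on the unit sphere `S^{D-1}`. -/
def sphProb (D : ℕ) : Measure (Sph D) := (sphArea D Set.univ)⁻¹ • sphArea D

/-- The unit torus `T^D = ℝ^D/ℤ^D`, realized as a product of unit circles. -/
abbrev Torus (D : ℕ) := Fin D → AddCircle (1 : ℝ)

/-- The canonical projection `ℝ^D → T^D`. -/
def toTorus (D : ℕ) (x : EucSp D) : Torus D := fun i => (x i : AddCircle (1 : ℝ))

/-- The representative in `[0,1)^D` of a point of the torus `T^D`. -/
def torusRep (D : ℕ) (x : Torus D) : EucSp D := WithLp.toLp 2 (fun i => ((AddCircle.equivIco 1 0 (x i) : Set.Ico (0:ℝ) (0+1)) : ℝ))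

/-- The fundamental domain `[0,1)^D` of the lattice `ℤ^D`. -/
def unitBox (D : ℕ) : Set (EucSp D) := {x | ∀ i, x i ∈ Set.Ico (0:ℝ) 1}

/-- `Y_r`: the part of the fundamental domain `[0,1)^D` lying at distance `> r` from `ℤ^D`. -/
def YrSet (D : ℕ) (r : ℝ) : Set (EucSp D) := {y ∈ unitBox D | r < Metric.infDist y (intLattice D)}

/-- `Φ_r(t) = μ_r({(y,v) ∈ Y_r × S^{D-1} : τ_r(y,v) ≥ t})`, where
`μ_r = dy dv / (|Y_r| |S^{D-1}|)` is normalized Lebesgue measure. -/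
def pathDistrib (D : ℕ) (r t : ℝ) : ℝ≥0∞ :=
  ((volume.restrict (YrSet D r)).prod (sphProb D))
      {p : EucSp D × Sph D | ENNReal.ofReal t ≤ freePath D r p.1 p.2}
    / volume (YrSet D r)
namespace FreePathAux

variable {D : ℕ}

/-- The lattice vector with integer coordinates `k`. -/
def latVec (D : ℕ) (k : Fin D → ℤ) : EucSp D := WithLp.toLp 2 (fun i => (k i : ℝ))

@[simp] lemma latVec_apply (k : Fin D → ℤ) (i : Fin D) : latVec D k i = (k i : ℝ) := rfl

lemma latVec_zero : latVec D 0 = 0 := by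
  ext i; simp [latVec]

lemma latVec_add (k l : Fin D → ℤ) : latVec D (k + l) = latVec D k + latVec D l := by
  ext i
  show ((k i + l i : ℤ) : ℝ) = (latVec D k + latVec D l) i
  rw [PiLp.add_apply]
  push_cast
  rfl

lemma latVec_neg (k : Fin D → ℤ) : latVec D (-k) = -latVec D k := by
  ext i
  show ((-(k i) : ℤ) : ℝ) = (-latVec D k) i
  rw [PiLp.neg_apply]
  push_cast
  rfl

lemma latVec_mem (k : Fin D → ℤ) : latVec D k ∈ intLattice D := fun i => ⟨k i, rfl⟩

lemma mem_intLattice_iff {x : EucSp D} : x ∈ intLattice D ↔ ∃ k : Fin D → ℤ, x = latVec D k := by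
  constructor
  · intro h
    choose k hk using h
    exact ⟨k, by ext i; exact hk i⟩
  · rintro ⟨k, rfl⟩; exact latVec_mem k


lemma intLattice_add {a b : EucSp D} (ha : a ∈ intLattice D) (hb : b ∈ intLattice D) :
    a + b ∈ intLattice D := by
  intro i
  obtain ⟨m, hm⟩ := ha i
  obtain ⟨n, hn⟩ := hb i
  exact ⟨m + n, by rw [PiLp.add_apply, hm, hn]; push_cast; ring⟩

lemma infDist_add_latVec (z : EucSp D) (k : Fin D → ℤ) :
    Metric.infDist (z + latVec D k) (intLattice D) = Metric.infDist z (intLattice D) := by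
  have hiso : Isometry (fun w : EucSp D => w + latVec D k) := Isometry.of_dist_eq (by
    intro a b; rw [dist_eq_norm, dist_eq_norm]; congr 1; abel)
  have himg : (fun w : EucSp D => w + latVec D k) '' intLattice D = intLattice D := by
    ext y
    constructor
    · rintro ⟨w, hw, rfl⟩
      exact intLattice_add hw (latVec_mem k)
    · intro hy
      refine ⟨y + latVec D (-k), ?_, by rw [latVec_neg]; module⟩
      exact intLattice_add hy (latVec_mem (-k))
  calc Metric.infDist (z + latVec D k) (intLattice D)
      = Metric.infDist ((fun w : EucSp D => w + latVec D k) z)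
          ((fun w : EucSp D => w + latVec D k) '' intLattice D) := by rw [himg]
    _ = Metric.infDist z (intLattice D) := Metric.infDist_image hiso

lemma line_in_closed_subgroup {H : AddSubgroup (EucSp D)} (hc : IsClosed (H : Set (EucSp D)))
    (h : ∀ ε : ℝ, 0 < ε → ∃ y : EucSp D, y ∈ H ∧ y ≠ 0 ∧ ‖y‖ < ε) :
    ∃ u : EucSp D, ‖u‖ = 1 ∧ ∀ t : ℝ, t • u ∈ H := by
  choose y hyH hy0 hyn using fun n : ℕ => h (1 / (n + 1)) (by positivity)
  have hns : ∀ n, ‖y n‖ ≠ 0 := fun n => norm_ne_zero_iff.mpr (hy0 n)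
  have hnpos : ∀ n, 0 < ‖y n‖ := fun n => norm_pos_iff.mpr (hy0 n)
  set u : ℕ → EucSp D := fun n => ‖y n‖⁻¹ • y n with hu
  have hus : ∀ n, u n ∈ Metric.sphere (0 : EucSp D) 1 := by
    intro n
    simp only [mem_sphere_iff_norm, sub_zero, hu, norm_smul, norm_inv, norm_norm]
    exact inv_mul_cancel₀ (hns n)
  obtain ⟨a, ha, φ, hφ, hta⟩ := (isCompact_sphere (0 : EucSp D) 1).tendsto_subseq hus
  have ha1 : ‖a‖ = 1 := by simpa [mem_sphere_iff_norm] using ha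
  refine ⟨a, ha1, fun t => ?_⟩
  have hcn : Tendsto (fun n => ‖y (φ n)‖) atTop (𝓝 0) := by
    refine squeeze_zero (fun n => (hnpos _).le) (fun n => ?_) tendsto_one_div_add_atTop_nhds_zero_nat
    refine (hyn (φ n)).le.trans ?_
    apply one_div_le_one_div_of_le (by positivity)
    have h2 : (n : ℝ) ≤ φ n := by exact_mod_cast hφ.le_apply
    linarith
  have key : Tendsto (fun n => (⌊t / ‖y (φ n)‖⌋ : ℝ) * ‖y (φ n)‖) atTop (𝓝 t) := by
    have hb : Tendsto (fun n => (⌊t / ‖y (φ n)‖⌋ : ℝ) * ‖y (φ n)‖ - t) atTop (𝓝 0) := by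
      apply squeeze_zero_norm (fun n => ?_) hcn
      have hc := hnpos (φ n)
      have : (⌊t / ‖y (φ n)‖⌋ : ℝ) * ‖y (φ n)‖ - t
          = ((⌊t / ‖y (φ n)‖⌋ : ℝ) - t / ‖y (φ n)‖) * ‖y (φ n)‖ := by
        field_simp
      rw [this, norm_mul, norm_norm]
      have h1 : ‖(⌊t / ‖y (φ n)‖⌋ : ℝ) - t / ‖y (φ n)‖‖ ≤ 1 := by
        rw [Real.norm_eq_abs, abs_sub_comm, abs_of_nonneg (by
          have := Int.floor_le (t / ‖y (φ n)‖); linarith)]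
        have := Int.lt_floor_add_one (t / ‖y (φ n)‖)
        linarith
      nlinarith [norm_nonneg (y (φ n))]
    have := hb.add_const t
    simpa using this
  have hzs : Tendsto (fun n => ⌊t / ‖y (φ n)‖⌋ • y (φ n)) atTop (𝓝 (t • a)) := by
    have heq : ∀ n, ⌊t / ‖y (φ n)‖⌋ • y (φ n)
        = ((⌊t / ‖y (φ n)‖⌋ : ℝ) * ‖y (φ n)‖) • u (φ n) := by
      intro n
      rw [hu]
      rw [smul_smul, mul_assoc, mul_inv_cancel₀ (hns (φ n)), mul_one,
        ← Int.cast_smul_eq_zsmul ℝ]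
    simp only [heq]
    exact key.smul hta
  exact hc.mem_of_tendsto hzs (Filter.Eventually.of_forall fun n => H.zsmul_mem (hyH _) _)



/-- A full `ℤ`-lattice in a nontrivial space admits a nonzero integer-valued functional. -/
lemma exists_int_valued_functional {F : Type*} [NormedAddCommGroup F]
    [NormedSpace ℝ F] [FiniteDimensional ℝ F] [Nontrivial F]
    (L : Submodule ℤ F) [DiscreteTopology L] [IsZLattice ℝ L] :
    ∃ f : F →ₗ[ℝ] ℝ, f ≠ 0 ∧ ∀ w : F, w ∈ L → ∃ m : ℤ, f w = m := by
  haveI : Module.Free ℤ L := ZLattice.module_free ℝ L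
  haveI : Module.Finite ℤ L := ZLattice.module_finite ℝ L
  let b := Module.Free.chooseBasis ℤ L
  let β := b.ofZLatticeBasis ℝ L
  obtain ⟨i₀⟩ := β.index_nonempty
  refine ⟨β.coord i₀, ?_, ?_⟩
  · intro h0
    have h2 : β.coord i₀ (β i₀) = 0 := by rw [h0]; rfl
    rw [Module.Basis.coord_apply, Module.Basis.repr_self] at h2
    simp at h2
  · intro w hw
    refine ⟨b.repr (⟨w, hw⟩ : L) i₀, ?_⟩
    rw [Module.Basis.coord_apply]
    exact b.ofZLatticeBasis_repr_apply ℝ L (⟨w, hw⟩ : L) i₀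

/-- The subgroup `ℝ v + ℤ^D` of `ℝ^D`. -/
def lineLat (D : ℕ) (v : EucSp D) : AddSubgroup (EucSp D) where
  carrier := {y | ∃ t : ℝ, ∃ k : Fin D → ℤ, y = t • v + latVec D k}
  zero_mem' := ⟨0, 0, by rw [latVec_zero, zero_smul, add_zero]⟩
  add_mem' := by
    rintro a b ⟨t, k, rfl⟩ ⟨s, l, rfl⟩
    exact ⟨t + s, k + l, by rw [latVec_add, add_smul]; abel⟩
  neg_mem' := by
    rintro a ⟨t, k, rfl⟩
    exact ⟨-t, -k, by rw [latVec_neg, neg_smul]; abel⟩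

/-- Kronecker-type theorem: if `k ⬝ v ≠ 0` for all nonzero integer vectors `k`, then
`ℝ v + ℤ^D` is dense in `ℝ^D`. -/
theorem dense_lineLat (v : EucSp D)
    (hv : ∀ k : Fin D → ℤ, k ≠ 0 → (∑ i, (k i : ℝ) * v i) ≠ 0) :
    Dense ((lineLat D v : Set (EucSp D))) := by
  set G := (lineLat D v).topologicalClosure with hGdef
  have hGc : IsClosed (G : Set (EucSp D)) := (lineLat D v).isClosed_topologicalClosure
  let V : Submodule ℝ (EucSp D) :=
    { carrier := {x : EucSp D | ∀ t : ℝ, t • x ∈ G}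
      add_mem' := fun {a b} ha hb t => by
        rw [smul_add]; exact G.add_mem (ha t) (hb t)
      zero_mem' := fun t => by rw [smul_zero]; exact G.zero_mem
      smul_mem' := fun c x hx t => by rw [smul_smul]; exact hx (t * c) }
  have memV : ∀ x : EucSp D, x ∈ V ↔ ∀ t : ℝ, t • x ∈ G := fun x => Iff.rfl
  have hVG : ∀ x, x ∈ V → x ∈ G := fun x hx => by
    have := ((memV x).mp hx) 1
    rwa [one_smul] at this
  have hvV : v ∈ V := by
    intro t
    exact (lineLat D v).le_topologicalClosure ⟨t, 0, by rw [latVec_zero, add_zero]⟩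
  have hlat : ∀ k : Fin D → ℤ, latVec D k ∈ G := fun k =>
    (lineLat D v).le_topologicalClosure ⟨0, k, by rw [zero_smul, zero_add]⟩
  have hei : ∀ i : Fin D, (EuclideanSpace.single i (1 : ℝ) : EucSp D) ∈ G := by
    intro i
    have h1 : latVec D (Pi.single i 1) = EuclideanSpace.single i (1 : ℝ) := by
      ext j
      rw [latVec_apply, EuclideanSpace.single_apply, Pi.single_apply]
      split <;> simp
    rw [← h1]; exact hlat _
  by_cases hV : V = ⊤
  · rw [dense_iff_closure_eq]
    apply Set.eq_univ_of_forall
    intro z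
    have : z ∈ G := hVG z (by rw [hV]; trivial)
    exact this
  · exfalso
    have hWne : Vᗮ ≠ ⊥ := fun h => hV (Submodule.orthogonal_eq_bot_iff.mp h)
    have hsep : ∃ ε : ℝ, 0 < ε ∧ ∀ w : EucSp D, w ∈ G → w ∈ Vᗮ → ‖w‖ < ε → w = 0 := by
      by_contra hcon
      push_neg at hcon
      have hc2 : ∀ ε : ℝ, 0 < ε → ∃ y : EucSp D,
          y ∈ G ⊓ (Vᗮ).toAddSubgroup ∧ y ≠ 0 ∧ ‖y‖ < ε := by
        intro ε hε
        obtain ⟨w, hw1, hw2, hw3, hw4⟩ := hcon ε hε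
        exact ⟨w, AddSubgroup.mem_inf.mpr ⟨hw1, hw2⟩, hw4, hw3⟩
      have hclosed : IsClosed ((G ⊓ (Vᗮ).toAddSubgroup : AddSubgroup (EucSp D)) :
          Set (EucSp D)) := by
        have h1 : ((G ⊓ (Vᗮ).toAddSubgroup : AddSubgroup (EucSp D)) : Set (EucSp D))
            = (G : Set (EucSp D)) ∩ (Vᗮ : Set (EucSp D)) := rfl
        rw [h1]
        exact hGc.inter (Vᗮ).closed_of_finiteDimensional
      obtain ⟨u, hu1, huH⟩ := line_in_closed_subgroup hclosed hc2
      have huV : u ∈ V := fun t => (AddSubgroup.mem_inf.mp (huH t)).1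
      have huW : u ∈ Vᗮ := by
        have := (AddSubgroup.mem_inf.mp (huH 1)).2
        rwa [one_smul] at this
      have hu0 : u = 0 := by
        have h0 : u ∈ (⊥ : Submodule ℝ (EucSp D)) :=
          V.orthogonal_disjoint.le_bot (Submodule.mem_inf.mpr ⟨huV, huW⟩)
        simpa using h0
      rw [hu0] at hu1; norm_num at hu1
    obtain ⟨ε, hε, hsep⟩ := hsep
    set Q : EucSp D →L[ℝ] ↥Vᗮ := Submodule.orthogonalProjectionOnto Vᗮ with hQdef
    have hQmem : ∀ g : EucSp D, g ∈ G → ((Q g : EucSp D) ∈ G) := by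
      intro g hg
      rw [hQdef, ← Submodule.starProjection_apply, Submodule.starProjection_orthogonal_val]
      exact G.sub_mem hg (hVG _ (Submodule.orthogonalProjectionOnto V g).2)
    let L : Submodule ℤ ↥Vᗮ :=
      { carrier := {w : ↥Vᗮ | (w : EucSp D) ∈ G}
        add_mem' := fun {a b} ha hb => by
          show ((a + b : ↥Vᗮ) : EucSp D) ∈ G
          rw [Submodule.coe_add]; exact G.add_mem ha hb
        zero_mem' := by
          show ((0 : ↥Vᗮ) : EucSp D) ∈ G
          rw [Submodule.coe_zero]; exact G.zero_mem
        smul_mem' := fun n w hw => by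
          show ((n • w : ↥Vᗮ) : EucSp D) ∈ G
          rw [Submodule.coe_smul_of_tower]
          exact G.zsmul_mem hw n }
    have memL : ∀ w : ↥Vᗮ, w ∈ L ↔ (w : EucSp D) ∈ G := fun _ => Iff.rfl
    haveI : DiscreteTopology L := by
      apply discreteTopology_of_isOpen_singleton_zero
      have hset : {(0 : L)} = (fun w : L => ((w : ↥Vᗮ))) ⁻¹' Metric.ball (0 : ↥Vᗮ) ε := by
        ext w
        simp only [Set.mem_singleton_iff, Set.mem_preimage, Metric.mem_ball, dist_zero_right]
        constructor
        · rintro rfl; simpa using hε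
        · intro hw
          have h0 : ((w : ↥Vᗮ) : EucSp D) = 0 := hsep _ w.2 (w : ↥Vᗮ).2 hw
          exact Subtype.ext (Subtype.ext h0)
      rw [hset]
      exact Metric.isOpen_ball.preimage continuous_subtype_val
    have hQe : ∀ i : Fin D, Q (EuclideanSpace.single i (1 : ℝ)) ∈ L := fun i => hQmem _ (hei i)
    have hspan : ∀ w : ↥Vᗮ, w ∈ Submodule.span ℝ
        (Set.range fun i : Fin D => Q (EuclideanSpace.single i (1 : ℝ))) := by
      intro w
      have hw : Q (w : EucSp D) = w := Submodule.orthogonalProjectionOnto_mem_subspace_eq_self w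
      have hrepr : (w : EucSp D) = ∑ i, (w : EucSp D) i • (EuclideanSpace.single i (1 : ℝ)) := by
        have h2 := (EuclideanSpace.basisFun (Fin D) ℝ).sum_repr (w : EucSp D)
        simp only [EuclideanSpace.basisFun_apply, EuclideanSpace.basisFun_repr] at h2
        exact h2.symm
      rw [← hw, hrepr, map_sum]
      refine Submodule.sum_mem _ fun i _ => ?_
      rw [_root_.map_smul]
      exact Submodule.smul_mem _ _ (Submodule.subset_span ⟨i, rfl⟩)
    haveI : IsZLattice ℝ L := by
      constructor
      rw [eq_top_iff]
      rintro w -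
      have hsub : (Set.range fun i : Fin D => Q (EuclideanSpace.single i (1 : ℝ)))
          ⊆ (L : Set ↥Vᗮ) := by rintro _ ⟨i, rfl⟩; exact hQe i
      exact Submodule.span_mono hsub (hspan w)
    haveI : Nontrivial ↥Vᗮ := Submodule.nontrivial_iff_ne_bot.mpr hWne
    obtain ⟨f, hfne, hfint⟩ := exists_int_valued_functional L
    choose c hc using fun i : Fin D => hfint _ (hQe i)
    have hQv : Q v = 0 := by
      rw [hQdef]
      exact Submodule.orthogonalProjectionOnto_apply_of_mem_orthogonal
        (Submodule.le_orthogonal_orthogonal V hvV)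
    have hvrepr : v = ∑ i, v i • (EuclideanSpace.single i (1 : ℝ)) := by
      have h2 := (EuclideanSpace.basisFun (Fin D) ℝ).sum_repr v
      simp only [EuclideanSpace.basisFun_apply, EuclideanSpace.basisFun_repr] at h2
      exact h2.symm
    have hsum : ∑ i, v i * (c i : ℝ) = 0 := by
      have h1 : f (Q v) = 0 := by rw [hQv, map_zero]
      calc ∑ i, v i * (c i : ℝ)
          = ∑ i, v i * f (Q (EuclideanSpace.single i (1 : ℝ))) := by
            refine Finset.sum_congr rfl fun i _ => ?_
            rw [hc i]
        _ = f (Q v) := by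
            conv_rhs => rw [hvrepr]
            rw [map_sum, map_sum]
            refine Finset.sum_congr rfl fun i _ => ?_
            rw [_root_.map_smul, _root_.map_smul, smul_eq_mul]
        _ = 0 := h1
    have hcne : c ≠ 0 := by
      intro h0
      apply hfne
      apply LinearMap.ext
      intro w
      rw [LinearMap.zero_apply]
      refine Submodule.span_induction ?_ ?_ ?_ ?_ (hspan w)
      · rintro _ ⟨i, rfl⟩
        rw [hc i, congrFun h0 i]
        simp
      · exact map_zero _
      · intro a b _ _ ha hb; rw [map_add, ha, hb, add_zero]
      · intro a x _ hx; rw [_root_.map_smul, hx, smul_zero]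
    refine hv c hcne ?_
    calc ∑ i, (c i : ℝ) * v i = ∑ i, v i * (c i : ℝ) :=
          Finset.sum_congr rfl fun i _ => mul_comm _ _
      _ = 0 := hsum


/-- For an irrational direction, the line `x + t v` enters every `r`-neighborhood of the
lattice at some positive time. -/
lemma exists_pos_time (v : EucSp D)
    (hv : ∀ k : Fin D → ℤ, k ≠ 0 → (∑ i, (k i : ℝ) * v i) ≠ 0)
    (x : EucSp D) {r : ℝ} (hr : 0 < r) :
    ∃ t : ℝ, 0 < t ∧ Metric.infDist (x + t • v) (intLattice D) < r := by
  have hd := dense_lineLat v hv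
  set U : ℕ → Set (EucSp D) := fun n =>
    {z | ∃ t : ℝ, |t| ≤ (n : ℝ) ∧ Metric.infDist (z + t • v) (intLattice D) < r} with hU
  have hUopen : ∀ n, IsOpen (U n) := by
    intro n
    have h1 : U n = ⋃ t : ℝ, ⋃ (_ : |t| ≤ (n : ℝ)),
        {z | Metric.infDist (z + t • v) (intLattice D) < r} := by
      ext z
      simp only [hU, Set.mem_setOf_eq, Set.mem_iUnion]
      tauto
    rw [h1]
    refine isOpen_iUnion fun t => isOpen_iUnion fun _ => ?_
    have hcont : Continuous fun z : EucSp D => Metric.infDist (z + t • v) (intLattice D) :=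
      (Metric.continuous_infDist_pt _).comp (continuous_add_right _)
    exact isOpen_lt hcont continuous_const
  have hmem : ∀ z : EucSp D, ∃ n : ℕ, z ∈ U n := by
    intro z
    obtain ⟨b, hbmem, hb⟩ := Metric.mem_closure_iff.mp (hd (-z)) r hr
    obtain ⟨t, k, rfl⟩ := hbmem
    refine ⟨⌈|t|⌉₊, t, Nat.le_ceil _, ?_⟩
    have h1 : Metric.infDist (z + t • v) (intLattice D) ≤ dist (z + t • v) (latVec D (-k)) :=
      Metric.infDist_le_dist_of_mem (latVec_mem _)
    have h2 : dist (z + t • v) (latVec D (-k)) = dist (-z) (t • v + latVec D k) := by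
      rw [dist_eq_norm, dist_eq_norm, latVec_neg, sub_neg_eq_add, ← norm_neg]
      congr 1
      abel
    rw [h2] at h1
    exact lt_of_le_of_lt h1 hb
  set K : Set (EucSp D) := Metric.closedBall 0 ((D : ℝ) + 1) with hK
  have hcov : K ⊆ ⋃ n : ℕ, U n := fun z _ => Set.mem_iUnion.mpr (hmem z)
  obtain ⟨s, hs⟩ := (isCompact_closedBall (0 : EucSp D) ((D : ℝ) + 1)).elim_finite_subcover
    U hUopen hcov
  set N : ℕ := s.sup id with hN
  have hKU : K ⊆ U N := by
    intro z hz
    obtain ⟨n, hns, hzn⟩ := Set.mem_iUnion₂.mp (hs hz)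
    obtain ⟨t, ht, htr⟩ := hzn
    refine ⟨t, ht.trans ?_, htr⟩
    exact_mod_cast Finset.le_sup (f := id) hns
  set z₀ : EucSp D := x + ((N : ℝ) + 1) • v with hz₀
  set k₀ : Fin D → ℤ := fun i => -⌊z₀ i⌋ with hk₀
  set z₁ : EucSp D := z₀ + latVec D k₀ with hz₁
  have hz₁K : z₁ ∈ K := by
    rw [hK, Metric.mem_closedBall, dist_zero_right]
    have hco : ∀ i, ‖z₁ i‖ ≤ 1 := by
      intro i
      have he : z₁ i = z₀ i - ⌊z₀ i⌋ := by
        rw [hz₁, PiLp.add_apply, latVec_apply, hk₀]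
        push_cast
        ring
      rw [he, Real.norm_eq_abs]
      have h1 := Int.floor_le (z₀ i)
      have h2 := Int.lt_floor_add_one (z₀ i)
      rw [abs_le]
      constructor <;> linarith
    have hsum : ∑ i, ‖z₁ i‖ ^ 2 ≤ (D : ℝ) := by
      have h3 : ∀ i ∈ Finset.univ, ‖z₁ i‖ ^ 2 ≤ 1 := fun i _ => by
        have := hco i
        nlinarith [norm_nonneg (z₁ i)]
      calc ∑ i, ‖z₁ i‖ ^ 2 ≤ ∑ _i : Fin D, (1 : ℝ) := Finset.sum_le_sum h3
        _ = D := by simp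
    calc ‖z₁‖ = Real.sqrt (∑ i, ‖z₁ i‖ ^ 2) := EuclideanSpace.norm_eq z₁
      _ ≤ Real.sqrt D := Real.sqrt_le_sqrt hsum
      _ ≤ (D : ℝ) + 1 := by
          rw [show ((D : ℝ) + 1) = Real.sqrt (((D : ℝ) + 1) ^ 2) from
            (Real.sqrt_sq (by positivity)).symm]
          exact Real.sqrt_le_sqrt (by nlinarith [Nat.cast_nonneg (α := ℝ) D])
  obtain ⟨t, htN, htr⟩ := hKU hz₁K
  refine ⟨((N : ℝ) + 1) + t, by have := (abs_le.mp htN).1; linarith, ?_⟩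
  have heq : z₁ + t • v = (x + (((N : ℝ) + 1) + t) • v) + latVec D k₀ := by
    rw [hz₁, hz₀]
    module
  have hinv := infDist_add_latVec (x + (((N : ℝ) + 1) + t) • v) k₀
  rw [← heq] at hinv
  rw [← hinv]
  exact htr

end FreePathAux

/-- If the direction `v ∈ S^{D-1}` has rationally independent components, i.e. `k · v ≠ 0`
for every nonzero `k ∈ ℤ^D`, then the free path length `τ_r(x,v)` is finite for every
starting point `x` in the billiard table `Z_r`. -/
theorem freePath_lt_top_of_irrational_direction (D : ℕ) (hD : 2 ≤ D)
    (r : ℝ) (hr : r ∈ Set.Ioo (0 : ℝ) (1/2 : ℝ)) (v : Sph D)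
    (hv : ∀ k : Fin D → ℤ, k ≠ 0 → (∑ i, (k i : ℝ) * (v : EucSp D) i) ≠ 0)
    (x : EucSp D) (hx : r < Metric.infDist x (intLattice D)) :
    freePath D r x (v : EucSp D) < ⊤ := by
  obtain ⟨t, ht0, htr⟩ := FreePathAux.exists_pos_time (v : EucSp D) hv x hr.1
  rw [freePath, if_neg (not_le.mpr hx)]
  have hmem : ENNReal.ofReal t ∈
      ENNReal.ofReal '' {t : ℝ | 0 < t ∧ Metric.infDist (x + t • (v : EucSp D)) (intLattice D) ≤ r} :=
    ⟨t, ⟨ht0, htr.le⟩, rfl⟩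
  exact lt_of_le_of_lt (sInf_le hmem) ENNReal.ofReal_lt_top
end
end

section
/- Let D ≥ 2 and let C₁, c, γ, r_* > 0. Let ρ ∈ L²(T^D) be nonnegative with ρ not almost everywhere zero, and let Φ ∈ L^∞([0,∞) × S^{D-1}) satisfy 0 ≤ Φ ≤ 1 and ∫_{S^{D-1}} Φ(t,v) dv ≥ C₁/(t r_*^{D−1}) for almost every t > 1/r_*^{D−1}. Suppose f : [0,∞) × T^D × S^{D-1} → ℝ is measurable, with f(t,·,·) ∈ L²(T^D × S^{D-1}) for a.e. t, and satisfies f(t,x,v) ≥ ρ(x − t v) Φ(t,v) almost everywhere, together with ‖f(t,·,·) − ∫_{T^D} ρ(x) dx‖_{L²(T^D × S^{D-1})} ≤ c e^{−γ t} ‖ρ‖_{L²(T^D)} for almost every t ≥ 0. Then C₁/(t r_*^{D−1}) ≤ ‖ρ‖_{L¹(T^D)}/‖ρ‖_{L²(T^D)} + c e^{−γ t} for almost every t > 1/r_*^{D−1}. -/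
open MeasureTheory Metric Set Filter Topology
open scoped ENNReal RealInnerProductSpace

noncomputable section

lemma cs_helper {α : Type*} [MeasurableSpace α] {μ : Measure α} [IsProbabilityMeasure μ]
    {h : α → ℝ} (hh : MemLp h 2 μ) :
    ∫ a, |h a| ∂μ ≤ Real.sqrt (∫ a, h a ^ 2 ∂μ) := by
  have hpq : Real.HolderConjugate 2 2 := Real.HolderConjugate.two_two
  have h2 : (ENNReal.ofReal (2:ℝ)) = 2 := by norm_num
  have key := integral_mul_norm_le_Lp_mul_Lq (μ := μ) (f := h) (g := fun _ => (1:ℝ)) hpq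
    (by rw [h2]; exact hh) (by rw [h2]; exact memLp_const 1)
  simp only [norm_one, mul_one, Real.norm_eq_abs, abs_one, Real.one_rpow, integral_const,
    measure_univ, probReal_univ, ENNReal.toReal_one, one_smul, mul_one] at key
  have heq : (∫ a, |h a| ^ (2:ℝ) ∂μ) = ∫ a, h a ^ 2 ∂μ := by
    refine integral_congr_ae (.of_forall fun a => ?_)
    show |h a| ^ (2:ℝ) = h a ^ 2
    rw [Real.rpow_two, sq_abs]
  rw [heq] at key
  rw [Real.sqrt_eq_rpow]
  exact key

lemma sphProb_prob (D : ℕ) (hD : 2 ≤ D) : IsProbabilityMeasure (sphProb D) := by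
  constructor
  rw [sphProb, Measure.smul_apply, smul_eq_mul]
  refine ENNReal.inv_mul_cancel ?_ (by rw [sphArea]; exact measure_ne_top _ _)
  rw [sphArea, Measure.toSphere_apply_univ]
  refine mul_ne_zero ?_ (measure_ball_pos _ _ one_pos).ne'
  have : Module.finrank ℝ (EucSp D) = D := finrank_euclideanSpace_fin
  simp only [this]
  exact_mod_cast (by omega : D ≠ 0)

instance torus_prob (D : ℕ) : IsProbabilityMeasure (volume : Measure (Torus D)) := by
  haveI : IsProbabilityMeasure (volume : Measure (AddCircle (1:ℝ))) :=
    ⟨by rw [AddCircle.measure_univ]; norm_num⟩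
  infer_instance

/-- The key comparison inequality in the proof of the main theorem: if `f(t,x,v)` dominates
`ρ(x - t v) Φ(t,v)` with `∫ Φ(t,v) dv ≥ C₁/(t r_*^{D-1})`, and if `f` converges to the
constant `∫ ρ dx` in `L²` at exponential rate `c e^{-γ t}`, then
`C₁/(t r_*^{D-1}) ≤ ‖ρ‖_{L¹}/‖ρ‖_{L²} + c e^{-γ t}` for a.e. `t > 1/r_*^{D-1}`. -/
theorem comparison_inequality (D : ℕ) (hD : 2 ≤ D)
    (C₁ c γ rstar : ℝ) (hC₁ : 0 < C₁) (hc : 0 < c) (hγ : 0 < γ) (hrstar : 0 < rstar)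
    (ρ : Torus D → ℝ) (hρ2 : MemLp ρ 2 (volume : Measure (Torus D)))
    (hρ0 : 0 ≤ᵐ[(volume : Measure (Torus D))] ρ)
    (hρne : ¬ ρ =ᵐ[(volume : Measure (Torus D))] 0)
    (Φ : ℝ → Sph D → ℝ)
    (hΦmeas : AEStronglyMeasurable (fun p : ℝ × Sph D => Φ p.1 p.2)
      ((volume.restrict (Set.Ici (0:ℝ))).prod (sphProb D)))
    (hΦ01 : ∀ t v, 0 ≤ Φ t v ∧ Φ t v ≤ 1)
    (hΦlow : ∀ᵐ t ∂(volume.restrict {t : ℝ | 1 / rstar ^ (D-1) < t}),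
      C₁ / (t * rstar ^ (D-1)) ≤ ∫ v, Φ t v ∂(sphProb D))
    (f : ℝ → Torus D → Sph D → ℝ)
    (hfmeas : AEStronglyMeasurable (fun p : ℝ × Torus D × Sph D => f p.1 p.2.1 p.2.2)
      ((volume.restrict (Set.Ici (0:ℝ))).prod
        ((volume : Measure (Torus D)).prod (sphProb D))))
    (hfL2 : ∀ᵐ t ∂(volume.restrict (Set.Ici (0:ℝ))),
      MemLp (fun p : Torus D × Sph D => f t p.1 p.2) 2
        ((volume : Measure (Torus D)).prod (sphProb D)))
    (hflow : ∀ᵐ p ∂((volume.restrict (Set.Ici (0:ℝ))).prod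
        ((volume : Measure (Torus D)).prod (sphProb D))),
      ρ (p.2.1 - toTorus D (p.1 • (p.2.2 : EucSp D))) * Φ p.1 p.2.2 ≤ f p.1 p.2.1 p.2.2)
    (hfdecay : ∀ᵐ t ∂(volume.restrict (Set.Ici (0:ℝ))),
      Real.sqrt (∫ x : Torus D, ∫ v, (f t x v - ∫ y : Torus D, ρ y) ^ 2 ∂(sphProb D))
        ≤ c * Real.exp (-γ * t) * Real.sqrt (∫ y : Torus D, (ρ y) ^ 2)) :
    ∀ᵐ t ∂(volume.restrict {t : ℝ | 1 / rstar ^ (D-1) < t}),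
      C₁ / (t * rstar ^ (D-1)) ≤
        (∫ y : Torus D, |ρ y|) / Real.sqrt (∫ y : Torus D, (ρ y) ^ 2)
          + c * Real.exp (-γ * t) := by
  haveI hνP : IsProbabilityMeasure (sphProb D) := sphProb_prob D hD
  set ν := sphProb D with hν
  set μ2 := (volume : Measure (Torus D)).prod ν with hμ2
  have hrpos : (0:ℝ) < rstar ^ (D - 1) := pow_pos hrstar _
  have hsub : {t : ℝ | 1 / rstar ^ (D-1) < t} ⊆ Set.Ici (0:ℝ) := by
    intro t ht
    have : (0:ℝ) < 1 / rstar ^ (D-1) := by positivity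
    exact le_of_lt (this.trans ht)
  -- constants
  have hρm := hρ2.aestronglyMeasurable
  have hI2 : Integrable (fun y => ρ y ^ 2) (volume : Measure (Torus D)) := hρ2.integrable_sq
  have hval2nn : 0 ≤ ∫ y : Torus D, ρ y ^ 2 := integral_nonneg fun y => sq_nonneg _
  have h2pos : 0 < ∫ y : Torus D, ρ y ^ 2 := by
    rcases hval2nn.lt_or_eq with h | h
    · exact h
    · exfalso
      apply hρne
      have h0 := (integral_eq_zero_iff_of_nonneg (fun y => sq_nonneg (ρ y)) hI2).mp h.symm
      filter_upwards [h0] with y hy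
      exact pow_eq_zero_iff two_ne_zero |>.mp hy
  set B := Real.sqrt (∫ y : Torus D, ρ y ^ 2) with hB
  have hBpos : 0 < B := Real.sqrt_pos.mpr h2pos
  set A := ∫ y : Torus D, ρ y with hA
  have hAnonneg : 0 ≤ A := integral_nonneg_of_ae hρ0
  have hAabs : (∫ y : Torus D, |ρ y|) = A :=
    integral_congr_ae (hρ0.mono fun y hy => abs_of_nonneg hy)
  -- transfer a.e. facts
  have hΦm' : ∀ᵐ t ∂(volume.restrict (Set.Ici (0:ℝ))),
      AEStronglyMeasurable (fun v => Φ t v) ν := hΦmeas.prodMk_left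
  have hA1 := ae_restrict_of_ae_restrict_of_subset hsub hΦm'
  have hA2 := ae_restrict_of_ae_restrict_of_subset hsub hfL2
  have hA3 := ae_restrict_of_ae_restrict_of_subset hsub (Measure.ae_ae_of_ae_prod hflow)
  have hA4 := ae_restrict_of_ae_restrict_of_subset hsub hfdecay
  filter_upwards [hΦlow, hA1, hA2, hA3, hA4] with t hlow hΦm hFL2 hdom hdecay
  set ce := c * Real.exp (-γ * t) with hce
  have hcepos : 0 < ce := by positivity
  -- measure preserving machinery
  have hacont : Continuous (fun v : Sph D => toTorus D (t • (v : EucSp D))) := by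
    have h1 : Continuous (toTorus D) :=
      continuous_pi fun i => (AddCircle.continuous_mk' 1).comp
        ((continuous_apply i).comp (by fun_prop))
    exact h1.comp (by fun_prop)
  have hgm : Measurable (Function.uncurry fun (v : Sph D) (x : Torus D) =>
      x - toTorus D (t • (v : EucSp D))) :=
    measurable_snd.sub (hacont.measurable.comp measurable_fst)
  have hskew : MeasurePreserving
      (fun q : Sph D × Torus D => (q.1, q.2 - toTorus D (t • (q.1 : EucSp D))))
      (ν.prod volume) (ν.prod volume) :=
    (MeasurePreserving.id ν).skew_product hgm
      (ae_of_all _ fun v =>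
        (measurePreserving_sub_right (volume : Measure (Torus D))
          (toTorus D (t • (v : EucSp D)))).map_eq)
  have hswap : MeasurePreserving Prod.swap μ2 (ν.prod volume) :=
    Measure.measurePreserving_swap
  have hswap2 : MeasurePreserving Prod.swap (ν.prod (volume : Measure (Torus D))) μ2 :=
    Measure.measurePreserving_swap
  have hS2 : MeasurePreserving
      (fun p : Torus D × Sph D => (p.1 - toTorus D (t • (p.2 : EucSp D)), p.2)) μ2 μ2 :=
    hswap2.comp (hskew.comp hswap)
  have hsnd : MeasurePreserving (Prod.snd) (ν.prod (volume : Measure (Torus D))) volume :=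
    ⟨measurable_snd, by rw [Measure.map_snd_prod, measure_univ, one_smul]⟩
  have hT : MeasurePreserving
      (fun p : Torus D × Sph D => p.1 - toTorus D (t • (p.2 : EucSp D))) μ2 volume :=
    hsnd.comp (hskew.comp hswap)
  have hsndν : MeasurePreserving (Prod.snd) μ2 ν :=
    ⟨measurable_snd, by rw [Measure.map_snd_prod, measure_univ, one_smul]⟩
  -- functions
  set F : Torus D × Sph D → ℝ := fun p => f t p.1 p.2 with hF
  set G : Torus D × Sph D → ℝ :=
    fun p => ρ (p.1 - toTorus D (t • (p.2 : EucSp D))) * Φ t p.2 with hG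
  have hGm : AEStronglyMeasurable G μ2 :=
    (hρm.comp_quasiMeasurePreserving hT.quasiMeasurePreserving).mul
      (hΦm.comp_quasiMeasurePreserving hsndν.quasiMeasurePreserving)
  have hΦLp : MemLp (fun v => Φ t v) 2 ν :=
    MemLp.of_bound hΦm 1 (ae_of_all _ fun v => by
      rw [Real.norm_eq_abs, abs_of_nonneg (hΦ01 t v).1]; exact (hΦ01 t v).2)
  set P := ∫ v, (Φ t v) ^ 2 ∂ν with hP
  have hPnn : 0 ≤ P := integral_nonneg fun v => sq_nonneg _
  have hΦint : (∫ v, Φ t v ∂ν) ≤ Real.sqrt P := by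
    calc (∫ v, Φ t v ∂ν) = ∫ v, |Φ t v| ∂ν :=
          integral_congr_ae (ae_of_all _ fun v => (abs_of_nonneg (hΦ01 t v).1).symm)
      _ ≤ Real.sqrt P := cs_helper hΦLp
  -- lintegral identity
  set q : Torus D → ℝ≥0∞ := fun y => ENNReal.ofReal (ρ y ^ 2) with hq
  set φe : Sph D → ℝ≥0∞ := fun v => ENNReal.ofReal ((Φ t v) ^ 2) with hφe
  have hqm : AEMeasurable q (volume : Measure (Torus D)) :=
    (hρm.aemeasurable.pow_const 2).ennreal_ofReal
  have hφm : AEMeasurable φe ν := (hΦm.aemeasurable.pow_const 2).ennreal_ofReal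
  have key1 : ∫⁻ p, q (p.1 - toTorus D (t • (p.2 : EucSp D))) * φe p.2 ∂μ2
      = (∫⁻ y, q y) * ∫⁻ v, φe v ∂ν := by
    have hmap : Measure.map
        (fun p : Torus D × Sph D => (p.1 - toTorus D (t • (p.2 : EucSp D)), p.2)) μ2 = μ2 :=
      hS2.map_eq
    have hfm : AEMeasurable (fun p : Torus D × Sph D => q p.1 * φe p.2) μ2 :=
      hqm.comp_fst.mul hφm.comp_snd
    calc ∫⁻ p, q (p.1 - toTorus D (t • (p.2 : EucSp D))) * φe p.2 ∂μ2
        = ∫⁻ p, q p.1 * φe p.2 ∂(Measure.map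
            (fun p : Torus D × Sph D => (p.1 - toTorus D (t • (p.2 : EucSp D)), p.2)) μ2) := by
          rw [lintegral_map' (by rw [hmap]; exact hfm) hS2.aemeasurable]
      _ = ∫⁻ p, q p.1 * φe p.2 ∂μ2 := by rw [hmap]
      _ = _ := lintegral_prod_mul hqm hφm
  have key2 : ∫ p, G p ^ 2 ∂μ2 = ((∫⁻ y, q y) * ∫⁻ v, φe v ∂ν).toReal := by
    rw [integral_eq_lintegral_of_nonneg_ae (ae_of_all _ fun p => sq_nonneg (G p))
      ((hGm.aemeasurable.pow_const 2).aestronglyMeasurable)]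
    rw [← key1]
    congr 1
    refine lintegral_congr fun p => ?_
    show ENNReal.ofReal (G p ^ 2) = _
    rw [hG]
    show ENNReal.ofReal ((ρ (p.1 - toTorus D (t • (p.2 : EucSp D))) * Φ t p.2) ^ 2) = _
    rw [mul_pow, ENNReal.ofReal_mul (sq_nonneg _)]
  have hq_int : ∫ y : Torus D, ρ y ^ 2 = (∫⁻ y, q y).toReal := by
    rw [integral_eq_lintegral_of_nonneg_ae (ae_of_all _ fun y => sq_nonneg (ρ y))
      ((hρm.aemeasurable.pow_const 2).aestronglyMeasurable)]
  have hφ_int : P = (∫⁻ v, φe v ∂ν).toReal := by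
    rw [hP, integral_eq_lintegral_of_nonneg_ae (ae_of_all _ fun v => sq_nonneg (Φ t v))
      ((hΦm.aemeasurable.pow_const 2).aestronglyMeasurable)]
  have hB2P : B ^ 2 * P = ∫ p, G p ^ 2 ∂μ2 := by
    rw [key2, ENNReal.toReal_mul, hB, Real.sq_sqrt hval2nn, hq_int, hφ_int]
  -- step IV
  have hG0 : ∀ᵐ p ∂μ2, 0 ≤ G p := by
    filter_upwards [hT.quasiMeasurePreserving.ae hρ0] with p hp
    exact mul_nonneg hp (hΦ01 t p.2).1
  have hGF : ∀ᵐ p ∂μ2, G p ^ 2 ≤ F p ^ 2 := by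
    filter_upwards [hG0, hdom] with p hp hd
    exact pow_le_pow_left₀ hp hd 2
  have hstep4 : ∫ p, G p ^ 2 ∂μ2 ≤ ∫ p, F p ^ 2 ∂μ2 :=
    integral_mono_of_nonneg (ae_of_all _ fun p => sq_nonneg _) hFL2.integrable_sq hGF
  -- step V
  set H : Torus D × Sph D → ℝ := fun p => F p - A with hH
  have hHLp : MemLp H 2 μ2 := hFL2.sub (memLp_const A)
  have hHint : Integrable H μ2 := hHLp.integrable one_le_two
  have hH2int : Integrable (fun p => H p ^ 2) μ2 := hHLp.integrable_sq
  have hdecay2 : Real.sqrt (∫ p, H p ^ 2 ∂μ2) ≤ ce * B := by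
    have hpr := integral_prod (fun p : Torus D × Sph D => H p ^ 2) hH2int
    rw [hpr]
    exact hdecay
  have hH2le : ∫ p, H p ^ 2 ∂μ2 ≤ (ce * B) ^ 2 := by
    have h0 : 0 ≤ ∫ p, H p ^ 2 ∂μ2 := integral_nonneg fun p => sq_nonneg _
    have h1 := pow_le_pow_left₀ (Real.sqrt_nonneg _) hdecay2 2
    rwa [Real.sq_sqrt h0] at h1
  have hHabs : |∫ p, H p ∂μ2| ≤ ce * B := by
    calc |∫ p, H p ∂μ2| ≤ ∫ p, |H p| ∂μ2 := by
          simpa [Real.norm_eq_abs] using norm_integral_le_integral_norm (μ := μ2) H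
      _ ≤ Real.sqrt (∫ p, H p ^ 2 ∂μ2) := cs_helper hHLp
      _ ≤ ce * B := hdecay2
  have hFexp : ∫ p, F p ^ 2 ∂μ2
      = (∫ p, H p ^ 2 ∂μ2) + (2 * A) * (∫ p, H p ∂μ2) + A ^ 2 := by
    have hint2 : Integrable (fun p => (2 * A) * H p + A ^ 2) μ2 :=
      (hHint.const_mul _).add (integrable_const _)
    calc ∫ p, F p ^ 2 ∂μ2
        = ∫ p, (H p ^ 2 + ((2 * A) * H p + A ^ 2)) ∂μ2 := by
          refine integral_congr_ae (ae_of_all _ fun p => ?_)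
          show F p ^ 2 = H p ^ 2 + ((2 * A) * H p + A ^ 2)
          rw [hH]; ring
      _ = (∫ p, H p ^ 2 ∂μ2) + ∫ p, ((2 * A) * H p + A ^ 2) ∂μ2 :=
          integral_add hH2int hint2
      _ = _ := by
          rw [integral_add (hHint.const_mul _) (integrable_const _), integral_const_mul,
            integral_const, probReal_univ, one_smul]
          ring
  have hFle : ∫ p, F p ^ 2 ∂μ2 ≤ (A + ce * B) ^ 2 := by
    have h2 : (2 * A) * (∫ p, H p ∂μ2) ≤ (2 * A) * (ce * B) :=
      mul_le_mul_of_nonneg_left ((le_abs_self _).trans hHabs) (by positivity)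
    rw [hFexp]
    calc (∫ p, H p ^ 2 ∂μ2) + (2 * A) * (∫ p, H p ∂μ2) + A ^ 2
        ≤ (ce * B) ^ 2 + (2 * A) * (ce * B) + A ^ 2 :=
          add_le_add (add_le_add hH2le h2) le_rfl
      _ = (A + ce * B) ^ 2 := by ring
  have hchain : B ^ 2 * P ≤ (A + ce * B) ^ 2 := by
    rw [hB2P]; exact hstep4.trans hFle
  have hsqrt : B * Real.sqrt P ≤ A + ce * B := by
    have h1 : 0 ≤ A + ce * B := by positivity
    have h2 : B * Real.sqrt P = Real.sqrt (B ^ 2 * P) := by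
      rw [Real.sqrt_mul (sq_nonneg B), Real.sqrt_sq hBpos.le]
    rw [h2]
    calc Real.sqrt (B ^ 2 * P) ≤ Real.sqrt ((A + ce * B) ^ 2) := Real.sqrt_le_sqrt hchain
      _ = A + ce * B := Real.sqrt_sq h1
  have hfin : Real.sqrt P ≤ A / B + ce := by
    have heq : A / B + ce = (A + ce * B) / B := by field_simp
    rw [heq, le_div_iff₀ hBpos, mul_comm]
    exact hsqrt
  calc C₁ / (t * rstar ^ (D - 1)) ≤ ∫ v, Φ t v ∂ν := hlow
    _ ≤ Real.sqrt P := hΦint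
    _ ≤ A / B + ce := hfin
    _ = (∫ y : Torus D, |ρ y|) / B + ce := by rw [hAabs]
end
end
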